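/- Let (X_n, Y_n), n ≥ 1, and (X, Y) be pairs of real-valued random variables such that each of X_n, Y_n, X, Y has the Logistic distribution, and suppose (X_n, Y_n) converges in distribution to (X, Y) on ℝ². Then for every x, y ∈ ℝ, H̄(x)·H̄(y)·exp(−E[(X_n + x)⁺ ∧ (Y_n + y)⁺]) converges to H̄(x)·H̄(y)·exp(−E[(X + x)⁺ ∧ (Y + y)⁺]) as n → ∞. -/

import Mathlib

open MeasureTheory Real Set Filter

/-- The Logistic distribution function `H(x) = 1/(1+e^{-x})`. -/
noncomputable def H (x : ℝ) : ℝ := 1 / (1 + Real.exp (-x))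

/-- The tail `H̄ := 1 - H` of the Logistic distribution function. -/
noncomputable def Hbar (x : ℝ) : ℝ := 1 - H x

/-- The set 𝔉 of continuous, non-increasing functions `f : ℝ → [0,1]`
with `H̄(x)² ≤ f(x) ≤ H̄(x)` for all `x`. -/
def memF (f : ℝ → ℝ) : Prop :=
  (∀ x, f x ∈ Set.Icc (0:ℝ) 1) ∧ Continuous f ∧ Antitone f ∧
    ∀ x, Hbar x ^ 2 ≤ f x ∧ f x ≤ Hbar x

/-- The operator `T(f)(x) := H̄(x)² · exp(∫_{-x}^∞ f(s) ds)`. -/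
noncomputable def T (f : ℝ → ℝ) (x : ℝ) : ℝ :=
  Hbar x ^ 2 * Real.exp (∫ s in Set.Ioi (-x), f s)


section Stmt18Helpers
lemma H_nonneg (c : ℝ) : 0 ≤ H c := by
  unfold H; positivity

lemma H_le_one (c : ℝ) : H c ≤ 1 := by
  unfold H
  rw [div_le_one (by positivity)]
  linarith [Real.exp_pos (-c)]

lemma Hbar_le_exp (c : ℝ) : Hbar c ≤ Real.exp (-c) := by
  have hu : 0 < Real.exp (-c) := Real.exp_pos _
  have h1 : (0:ℝ) < 1 + Real.exp (-c) := by linarith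
  have : Hbar c = Real.exp (-c) / (1 + Real.exp (-c)) := by
    unfold Hbar H; field_simp; ring
  rw [this]
  exact div_le_self hu.le (by linarith)

lemma measure_gt {Ω : Type*} [MeasurableSpace Ω] (P : Measure Ω) [IsProbabilityMeasure P]
    {Z : Ω → ℝ} (hZ : Measurable Z) (hlog : ∀ s, (P {ω | Z ω ≤ s}).toReal = H s) (c : ℝ) :
    P {ω | c < Z ω} = ENNReal.ofReal (Hbar c) := by
  have hset : {ω | c < Z ω} = {ω | Z ω ≤ c}ᶜ := by ext ω; simp [not_le]
  have hms : MeasurableSet {ω | Z ω ≤ c} := hZ measurableSet_Iic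
  have h1 : P {ω | Z ω ≤ c} = ENNReal.ofReal (H c) := by
    rw [← hlog c, ENNReal.ofReal_toReal (measure_ne_top _ _)]
  rw [hset, measure_compl hms (measure_ne_top _ _), measure_univ, h1]
  unfold Hbar
  rw [ENNReal.ofReal_sub _ (H_nonneg c), ENNReal.ofReal_one]

lemma tail_lintegral_le {Ω : Type*} [MeasurableSpace Ω] (P : Measure Ω) [IsProbabilityMeasure P]
    {Z : Ω → ℝ} (hZ : Measurable Z) (hlog : ∀ s, (P {ω | Z ω ≤ s}).toReal = H s) (x M : ℝ) :
    ∫⁻ ω, ENNReal.ofReal (max (Z ω + x - M) 0) ∂P ≤ ENNReal.ofReal (Real.exp (x - M)) := by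
  have hmble : AEMeasurable (fun ω => max (Z ω + x - M) 0) P := by fun_prop
  rw [lintegral_eq_lintegral_meas_lt (f := fun ω => max (Z ω + x - M) 0) P
    (Eventually.of_forall fun ω => le_max_right _ _) hmble]
  have key : ∫⁻ t in Ioi (0:ℝ), P {ω | t < max (Z ω + x - M) 0}
      = ∫⁻ t in Ioi (0:ℝ), ENNReal.ofReal (Hbar (M - x + t)) := by
    apply setLIntegral_congr_fun measurableSet_Ioi
    intro t ht; beta_reduce
    have hset : {ω | t < max (Z ω + x - M) 0} = {ω | M - x + t < Z ω} := by
      ext ω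
      simp only [mem_setOf_eq, lt_max_iff]
      constructor
      · rintro (h | h)
        · linarith
        · exact absurd h (not_lt.mpr (mem_Ioi.mp ht).le)
      · intro h; left; linarith
    rw [hset, measure_gt P hZ hlog]
  rw [key]
  have step1 : ∫⁻ t in Ioi (0:ℝ), ENNReal.ofReal (Hbar (M - x + t))
      ≤ ∫⁻ t in Ioi (0:ℝ), ENNReal.ofReal (Real.exp (x - M) * Real.exp (-t)) := by
    refine lintegral_mono fun t => ENNReal.ofReal_le_ofReal ?_
    calc Hbar (M - x + t) ≤ Real.exp (-(M - x + t)) := Hbar_le_exp _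
      _ = Real.exp (x - M) * Real.exp (-t) := by rw [← Real.exp_add]; ring_nf
  refine step1.trans (le_of_eq ?_)
  have hint : IntegrableOn (fun t : ℝ => Real.exp (x - M) * Real.exp (-t)) (Ioi 0) := by
    have := exp_neg_integrableOn_Ioi 0 (b := 1) one_pos
    simp only [neg_one_mul] at this
    exact this.const_mul _
  rw [← ofReal_integral_eq_lintegral_ofReal hint
    (Eventually.of_forall fun t => by positivity)]
  congr 1
  rw [MeasureTheory.integral_const_mul, integral_exp_neg_Ioi, neg_zero, Real.exp_zero, mul_one]

lemma integrable_pos_part {Ω : Type*} [MeasurableSpace Ω] (P : Measure Ω) [IsProbabilityMeasure P]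
    {Z : Ω → ℝ} (hZ : Measurable Z) (hlog : ∀ s, (P {ω | Z ω ≤ s}).toReal = H s) (x M : ℝ) :
    Integrable (fun ω => max (Z ω + x - M) 0) P := by
  have hm : Measurable fun ω => max (Z ω + x - M) 0 := by fun_prop
  refine ⟨hm.aestronglyMeasurable, ?_⟩
  rw [hasFiniteIntegral_iff_ofReal (f := fun ω => max (Z ω + x - M) 0) (Eventually.of_forall fun ω => le_max_right _ _)]
  exact (tail_lintegral_le P hZ hlog x M).trans_lt ENNReal.ofReal_lt_top

lemma integral_pos_part_le {Ω : Type*} [MeasurableSpace Ω] (P : Measure Ω) [IsProbabilityMeasure P]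
    {Z : Ω → ℝ} (hZ : Measurable Z) (hlog : ∀ s, (P {ω | Z ω ≤ s}).toReal = H s) (x M : ℝ) :
    ∫ ω, max (Z ω + x - M) 0 ∂P ≤ Real.exp (x - M) := by
  have hm : Measurable fun ω => max (Z ω + x - M) 0 := by fun_prop
  rw [integral_eq_lintegral_of_nonneg_ae (f := fun ω => max (Z ω + x - M) 0)
    (Eventually.of_forall fun ω => le_max_right _ _) hm.aestronglyMeasurable]
  calc (∫⁻ ω, ENNReal.ofReal (max (Z ω + x - M) 0) ∂P).toReal
      ≤ (ENNReal.ofReal (Real.exp (x - M))).toReal :=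
        ENNReal.toReal_mono ENNReal.ofReal_ne_top (tail_lintegral_le P hZ hlog x M)
    _ = Real.exp (x - M) := ENNReal.toReal_ofReal (Real.exp_pos _).le

lemma trunc_pointwise (u v M : ℝ) (hM : 0 ≤ M) :
    0 ≤ min (max u 0) (max v 0) - min (min (max u 0) (max v 0)) M ∧
    min (max u 0) (max v 0) - min (min (max u 0) (max v 0)) M ≤ max (u - M) 0 := by
  set a := max u 0 with ha
  set b := max v 0 with hb
  constructor
  · have : min (min a b) M ≤ min a b := min_le_left _ _
    linarith
  · rcases le_total (min a b) M with h | h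
    · rw [min_eq_left h]
      simpa using le_max_right (u - M) 0
    · rw [min_eq_right h]
      rcases le_total u 0 with hu | hu
      · have h1 : a = 0 := max_eq_right hu
        have h2 : min a b ≤ 0 := h1 ▸ min_le_left a b
        have := le_max_right (u - M) 0
        linarith
      · have h1 : a = u := max_eq_left hu
        have h2 : min a b ≤ u := h1 ▸ min_le_left a b
        have := le_max_left (u - M) 0
        linarith

lemma trunc_close {Ω : Type*} [MeasurableSpace Ω] (P : Measure Ω) [IsProbabilityMeasure P]
    {Z W : Ω → ℝ} (hZ : Measurable Z) (hW : Measurable W)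
    (hlogZ : ∀ s, (P {ω | Z ω ≤ s}).toReal = H s)
    (x y M : ℝ) (hM : 0 ≤ M) :
    |∫ ω, min (max (Z ω + x) 0) (max (W ω + y) 0) ∂P -
      ∫ ω, min (min (max (Z ω + x) 0) (max (W ω + y) 0)) M ∂P| ≤ Real.exp (x - M) := by
  set g : Ω → ℝ := fun ω => min (max (Z ω + x) 0) (max (W ω + y) 0) with hg
  have hgm : Measurable g := by unfold g; fun_prop
  have hgnn : ∀ ω, 0 ≤ g ω := fun ω => le_min (le_max_right _ _) (le_max_right _ _)
  have hdom : Integrable (fun ω => max (Z ω + x) 0) P := by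
    simpa [sub_zero] using integrable_pos_part P hZ hlogZ x 0
  have hgint : Integrable g P := by
    refine hdom.mono' hgm.aestronglyMeasurable (Eventually.of_forall fun ω => ?_)
    rw [Real.norm_of_nonneg (hgnn ω)]
    exact min_le_left _ _
  have hgMint : Integrable (fun ω => min (g ω) M) P := by
    refine hgint.mono' (hgm.min measurable_const).aestronglyMeasurable
      (Eventually.of_forall fun ω => ?_)
    rw [Real.norm_of_nonneg (le_min (hgnn ω) hM)]
    exact min_le_left _ _
  have hpos : Integrable (fun ω => max (Z ω + x - M) 0) P := integrable_pos_part P hZ hlogZ x M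
  rw [← integral_sub hgint hgMint]
  have h1 : 0 ≤ ∫ ω, (g ω - min (g ω) M) ∂P :=
    integral_nonneg fun ω => (trunc_pointwise (Z ω + x) (W ω + y) M hM).1
  rw [abs_of_nonneg h1]
  calc ∫ ω, (g ω - min (g ω) M) ∂P
      ≤ ∫ ω, max (Z ω + x - M) 0 ∂P := by
        refine integral_mono (hgint.sub hgMint) hpos fun ω => ?_
        exact (trunc_pointwise (Z ω + x) (W ω + y) M hM).2
    _ ≤ Real.exp (x - M) := integral_pos_part_le P hZ hlogZ x M

end Stmt18Helpers

open Topology in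
/-- Under the same hypotheses as Statement 17, for all
`x, y ∈ ℝ`, `H̄(x)·H̄(y)·exp(−E[(X_n + x)⁺ ∧ (Y_n + y)⁺])` converges to
`H̄(x)·H̄(y)·exp(−E[(X + x)⁺ ∧ (Y + y)⁺])`. -/
theorem stmt18 {Ω : Type*} [MeasurableSpace Ω] (P : Measure Ω)
    [IsProbabilityMeasure P]
    (Xn Yn : ℕ → Ω → ℝ) (X Y : Ω → ℝ)
    (hXn : ∀ n, Measurable (Xn n)) (hYn : ∀ n, Measurable (Yn n))
    (hX : Measurable X) (hY : Measurable Y)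
    (hXnlog : ∀ n x, (P {ω | Xn n ω ≤ x}).toReal = H x)
    (hYnlog : ∀ n x, (P {ω | Yn n ω ≤ x}).toReal = H x)
    (hXlog : ∀ x, (P {ω | X ω ≤ x}).toReal = H x)
    (hYlog : ∀ x, (P {ω | Y ω ≤ x}).toReal = H x)
    (hconv : ∀ f : BoundedContinuousFunction (ℝ × ℝ) ℝ,
      Filter.Tendsto (fun n => ∫ ω, f (Xn n ω, Yn n ω) ∂P) Filter.atTop
        (nhds (∫ ω, f (X ω, Y ω) ∂P)))
    (x y : ℝ) :
    Filter.Tendsto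
      (fun n => Hbar x * Hbar y *
        Real.exp (-∫ ω, min (max (Xn n ω + x) 0) (max (Yn n ω + y) 0) ∂P))
      Filter.atTop
      (nhds (Hbar x * Hbar y *
        Real.exp (-∫ ω, min (max (X ω + x) 0) (max (Y ω + y) 0) ∂P))) := by
  have key : Tendsto (fun n => ∫ ω, min (max (Xn n ω + x) 0) (max (Yn n ω + y) 0) ∂P)
      atTop (𝓝 (∫ ω, min (max (X ω + x) 0) (max (Y ω + y) 0) ∂P)) := by
    rw [Metric.tendsto_atTop]
    intro ε hε
    set M : ℝ := max 0 (x - Real.log (ε / 4)) with hMdef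
    have hM0 : 0 ≤ M := le_max_left _ _
    have hexp : Real.exp (x - M) ≤ ε / 4 := by
      have h1 : x - Real.log (ε / 4) ≤ M := le_max_right _ _
      calc Real.exp (x - M) ≤ Real.exp (Real.log (ε / 4)) :=
            Real.exp_le_exp.mpr (by linarith)
        _ = ε / 4 := Real.exp_log (by linarith)
    have hcont : Continuous fun p : ℝ × ℝ =>
        min (min (max (p.1 + x) 0) (max (p.2 + y) 0)) M := by fun_prop
    set φ : BoundedContinuousFunction (ℝ × ℝ) ℝ :=
      BoundedContinuousFunction.mkOfBound
        ⟨fun p => min (min (max (p.1 + x) 0) (max (p.2 + y) 0)) M, hcont⟩ M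
        (fun p q => by
          have hp1 : 0 ≤ min (min (max (p.1 + x) 0) (max (p.2 + y) 0)) M :=
            le_min (le_min (le_max_right _ _) (le_max_right _ _)) hM0
          have hp2 : min (min (max (p.1 + x) 0) (max (p.2 + y) 0)) M ≤ M := min_le_right _ _
          have hq1 : 0 ≤ min (min (max (q.1 + x) 0) (max (q.2 + y) 0)) M :=
            le_min (le_min (le_max_right _ _) (le_max_right _ _)) hM0
          have hq2 : min (min (max (q.1 + x) 0) (max (q.2 + y) 0)) M ≤ M := min_le_right _ _
          rw [Real.dist_eq, abs_sub_le_iff]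
          constructor <;> simp only [ContinuousMap.coe_mk] <;> linarith) with hφdef
    have hφ := hconv φ
    rw [Metric.tendsto_atTop] at hφ
    obtain ⟨N, hN⟩ := hφ (ε / 4) (by linarith)
    refine ⟨N, fun n hn => ?_⟩
    have h1 := trunc_close P (hXn n) (hYn n) (hXnlog n) x y M hM0
    have h2 := trunc_close P hX hY hXlog x y M hM0
    have h3 : |(∫ ω, min (min (max (Xn n ω + x) 0) (max (Yn n ω + y) 0)) M ∂P) -
        ∫ ω, min (min (max (X ω + x) 0) (max (Y ω + y) 0)) M ∂P| < ε / 4 := by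
      have := hN n hn
      rw [Real.dist_eq] at this
      exact this
    rw [Real.dist_eq]
    calc |(∫ ω, min (max (Xn n ω + x) 0) (max (Yn n ω + y) 0) ∂P) -
          ∫ ω, min (max (X ω + x) 0) (max (Y ω + y) 0) ∂P|
        ≤ |(∫ ω, min (max (Xn n ω + x) 0) (max (Yn n ω + y) 0) ∂P) -
            ∫ ω, min (min (max (Xn n ω + x) 0) (max (Yn n ω + y) 0)) M ∂P| +
          |(∫ ω, min (min (max (Xn n ω + x) 0) (max (Yn n ω + y) 0)) M ∂P) -
            ∫ ω, min (min (max (X ω + x) 0) (max (Y ω + y) 0)) M ∂P| +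
          |(∫ ω, min (min (max (X ω + x) 0) (max (Y ω + y) 0)) M ∂P) -
            ∫ ω, min (max (X ω + x) 0) (max (Y ω + y) 0) ∂P| := by
          exact (abs_sub_le _ _ _).trans (by gcongr; exact abs_sub_le _ _ _)
      _ < ε := by
          rw [abs_sub_comm (∫ ω, min (min (max (X ω + x) 0) (max (Y ω + y) 0)) M ∂P)]
          linarith
  have h2 : Tendsto
      (fun n => Real.exp (-∫ ω, min (max (Xn n ω + x) 0) (max (Yn n ω + y) 0) ∂P)) atTop
      (𝓝 (Real.exp (-∫ ω, min (max (X ω + x) 0) (max (Y ω + y) 0) ∂P))) :=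
    (Real.continuous_exp.tendsto _).comp key.neg
  exact h2.const_mul _
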